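/- For every finite type V, relation A : V → V → Prop and weight function w : V → ℝ, there exists a greatest maximum-weight closed set: a maximum-weight closed set Y* for (A, w) such that every maximum-weight closed set for (A, w) is a subset of Y*. -/

import Mathlib

def ClosedFor {V : Type*} (A : V → V → Prop) (Y : Set V) : Prop :=
  ∀ i ∈ Y, ∀ j, A i j → j ∈ Y

noncomputable def pitWeight {V : Type*} [Fintype V] (w : V → ℝ) (Y : Set V) : ℝ :=
  ∑ i, Y.indicator w i

def IsMaxClosed {V : Type*} [Fintype V] (A : V → V → Prop) (w : V → ℝ) (Y : Set V) : Prop :=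
  ClosedFor A Y ∧ ∀ Z : Set V, ClosedFor A Z → pitWeight w Z ≤ pitWeight w Y

lemma pitWeight_union_inter {V : Type*} [Fintype V] (w : V → ℝ) (Y Z : Set V) :
    pitWeight w (Y ∪ Z) + pitWeight w (Y ∩ Z) = pitWeight w Y + pitWeight w Z := by
  classical
  unfold pitWeight
  rw [← Finset.sum_add_distrib, ← Finset.sum_add_distrib]
  apply Finset.sum_congr rfl
  intro i _
  by_cases hY : i ∈ Y <;> by_cases hZ : i ∈ Z <;>
    simp [Set.indicator, hY, hZ, add_comm]

lemma closedFor_union {V : Type*} (A : V → V → Prop) (Y Z : Set V)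
    (hY : ClosedFor A Y) (hZ : ClosedFor A Z) : ClosedFor A (Y ∪ Z) := by
  rintro i (hi | hi) j hij
  · exact Or.inl (hY i hi j hij)
  · exact Or.inr (hZ i hi j hij)

lemma closedFor_inter {V : Type*} (A : V → V → Prop) (Y Z : Set V)
    (hY : ClosedFor A Y) (hZ : ClosedFor A Z) : ClosedFor A (Y ∩ Z) := by
  rintro i ⟨h1, h2⟩ j hij
  exact ⟨hY i h1 j hij, hZ i h2 j hij⟩

lemma isMaxClosed_union {V : Type*} [Fintype V] (A : V → V → Prop) (w : V → ℝ)
    (Y Z : Set V) (hY : IsMaxClosed A w Y) (hZ : IsMaxClosed A w Z) :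
    IsMaxClosed A w (Y ∪ Z) := by
  obtain ⟨hYc, hYm⟩ := hY
  obtain ⟨hZc, hZm⟩ := hZ
  have hinter : pitWeight w (Y ∩ Z) ≤ pitWeight w Y :=
    hYm _ (closedFor_inter A Y Z hYc hZc)
  have hkey : pitWeight w Z ≤ pitWeight w (Y ∪ Z) := by
    have := pitWeight_union_inter w Y Z
    linarith
  exact ⟨closedFor_union A Y Z hYc hZc, fun W hW => le_trans (hZm W hW) hkey⟩

theorem exists_greatest_max_weight_closed_set {V : Type*} [Fintype V]
    (A : V → V → Prop) (w : V → ℝ) :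
    ∃ Ystar : Set V, IsMaxClosed A w Ystar ∧
      ∀ Y : Set V, IsMaxClosed A w Y → Y ⊆ Ystar := by
  classical
  -- existence of some max closed set
  have hfin : (setOf (ClosedFor A)).Finite := Set.toFinite _
  have hne : (setOf (ClosedFor A)).Nonempty := ⟨∅, fun i hi => absurd hi (Set.notMem_empty i)⟩
  obtain ⟨Y0, hY0, hmax⟩ := Set.Finite.exists_maximalFor (pitWeight w) _ hfin hne
  have hY0max : IsMaxClosed A w Y0 := by
    refine ⟨hY0, fun Z hZ => ?_⟩
    by_contra h
    push_neg at h
    exact absurd (hmax hZ h.le) (not_le.mpr h)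
  -- the union of all max closed sets
  set S : Set (Set V) := setOf (IsMaxClosed A w) with hS
  have hSfin : S.Finite := Set.toFinite _
  have hstep : ∀ T : Set (Set V), T.Finite → T ⊆ S → IsMaxClosed A w (Y0 ∪ ⋃₀ T) := by
    intro T hTfin
    refine Set.Finite.induction_on (motive := fun T _ => T ⊆ S → IsMaxClosed A w (Y0 ∪ ⋃₀ T))
      T hTfin (fun _ => by simpa using hY0max) ?_
    intro a s _ _ ih hsub
    · have ha : IsMaxClosed A w a := hsub (Set.mem_insert a s)
      have hs : IsMaxClosed A w (Y0 ∪ ⋃₀ s) := ih (fun x hx => hsub (Set.mem_insert_of_mem a hx))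
      have : Y0 ∪ ⋃₀ insert a s = a ∪ (Y0 ∪ ⋃₀ s) := by
        rw [Set.sUnion_insert]
        ext x; simp; tauto
      rw [this]
      exact isMaxClosed_union A w _ _ ha hs
  refine ⟨Y0 ∪ ⋃₀ S, hstep S hSfin (le_refl _), fun Y hY x hx => ?_⟩
  exact Or.inr ⟨Y, hY, hx⟩
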